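/- Let p ∤ |G| for a finite group G, and let M be a finitely generated ℤ_p[G]-module. For subgroups H₁, H₂ ≤ G with ℤ_p[G/H₁] ≅ ℤ_p[G/H₂] as ℤ_p[G]-modules, the fixed-point modules M^{H₁} and M^{H₂} are isomorphic as ℤ_p-modules. -/

import Mathlib

open Finsupp

section aux

variable {G : Type*} [Group G] {p : ℕ} [Fact p.Prime] {M : Type*} [AddCommGroup M]
  [Module ℤ_[p] M]

noncomputable def fixMap (ρ : Representation ℤ_[p] G M) (H : Subgroup G) (m : M) :
    ((G ⧸ H) →₀ ℤ_[p]) →ₗ[ℤ_[p]] M :=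
  Finsupp.lift M ℤ_[p] (G ⧸ H) (fun q => ρ q.out m)

lemma fixMap_single (ρ : Representation ℤ_[p] G M) (H : Subgroup G) {m : M}
    (hm : ∀ h ∈ H, ρ h m = m) (g : G) (c : ℤ_[p]) :
    fixMap ρ H m (single (↑g : G ⧸ H) c) = c • ρ g m := by
  have h1 : ((↑g : G ⧸ H)).out⁻¹ * g ∈ H := by
    rw [← QuotientGroup.eq]
    exact QuotientGroup.out_eq' _
  have h2 : ρ ((↑g : G ⧸ H)).out m = ρ g m := by
    conv_rhs => rw [show g = ((↑g : G ⧸ H)).out * (((↑g : G ⧸ H)).out⁻¹ * g) by group]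
    rw [map_mul, Module.End.mul_apply, hm _ h1]
  simp [fixMap, Finsupp.lift_apply, Finsupp.sum_single_index, h2]

lemma fixMap_single_one (ρ : Representation ℤ_[p] G M) (H : Subgroup G) {m : M}
    (hm : ∀ h ∈ H, ρ h m = m) :
    fixMap ρ H m (single ((1 : G) : G ⧸ H) 1) = m := by
  rw [fixMap_single ρ H hm, map_one, one_smul]; rfl

lemma fixMap_equivariant (ρ : Representation ℤ_[p] G M) (H : Subgroup G) {m : M}
    (hm : ∀ h ∈ H, ρ h m = m) (g : G) (x : (G ⧸ H) →₀ ℤ_[p]) :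
    fixMap ρ H m (Finsupp.mapDomain (fun c => g • c) x) = ρ g (fixMap ρ H m x) := by
  induction x using Finsupp.induction_linear with
  | zero => simp
  | add a b ha hb => simp only [Finsupp.mapDomain_add, map_add, ha, hb]
  | single q c =>
    induction q using QuotientGroup.induction_on with
    | H k =>
      rw [Finsupp.mapDomain_single,
        show g • ((k : G) : G ⧸ H) = ((g * k : G) : G ⧸ H) from rfl,
        fixMap_single ρ H hm, fixMap_single ρ H hm, map_mul, Module.End.mul_apply, map_smul]

lemma fixMap_eq_of_equivariant (ρ : Representation ℤ_[p] G M) (H : Subgroup G)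
    (f : ((G ⧸ H) →₀ ℤ_[p]) →ₗ[ℤ_[p]] M)
    (hf : ∀ g x, f (Finsupp.mapDomain (fun c => g • c) x) = ρ g (f x))
    (hm : ∀ h ∈ H, ρ h (f (single ((1 : G) : G ⧸ H) 1)) = f (single ((1 : G) : G ⧸ H) 1)) :
    f = fixMap ρ H (f (single ((1 : G) : G ⧸ H) 1)) := by
  apply Finsupp.lhom_ext
  intro a b
  induction a using QuotientGroup.induction_on with
  | H k =>
    have hsm : single ((k : G) : G ⧸ H) b
        = Finsupp.mapDomain (fun c => k • c) (single ((1 : G) : G ⧸ H) b) := by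
      rw [Finsupp.mapDomain_single,
        show k • ((1 : G) : G ⧸ H) = ((k * 1 : G) : G ⧸ H) from rfl, mul_one]
    rw [fixMap_single ρ H hm, hsm, hf]
    have : single ((1 : G) : G ⧸ H) b = b • single ((1 : G) : G ⧸ H) (1 : ℤ_[p]) := by
      rw [Finsupp.smul_single, smul_eq_mul, mul_one]
    rw [this, map_smul, map_smul]

lemma fixMap_add (ρ : Representation ℤ_[p] G M) (H : Subgroup G) (m m' : M) :
    fixMap ρ H (m + m') = fixMap ρ H m + fixMap ρ H m' := by
  apply Finsupp.lhom_ext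
  intro a b
  simp [fixMap, Finsupp.lift_apply, Finsupp.sum_single_index, smul_add]

lemma fixMap_smul (ρ : Representation ℤ_[p] G M) (H : Subgroup G) (c : ℤ_[p]) (m : M) :
    fixMap ρ H (c • m) = c • fixMap ρ H m := by
  apply Finsupp.lhom_ext
  intro a b
  simp [fixMap, Finsupp.lift_apply, Finsupp.sum_single_index, smul_comm b c]

end aux

/-- Let `G` be a finite group, `p` a prime with `p ∤ |G|`, and `M` a finitely generated
`ℤ_p[G]`-module (given by a representation `ρ` of `G` on a finitely generated
`ℤ_p`-module). For subgroups `H₁, H₂ ≤ G` with `ℤ_p[G/H₁] ≅ ℤ_p[G/H₂]` as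
`ℤ_p[G]`-modules, the fixed-point modules `M^{H₁}` and `M^{H₂}` are isomorphic as
`ℤ_p`-modules. -/
theorem fixed_points_iso (G : Type*) [Group G] [Finite G] (p : ℕ) [Fact p.Prime]
    (hp : ¬ p ∣ Nat.card G) (M : Type*) [AddCommGroup M] [Module ℤ_[p] M]
    [Module.Finite ℤ_[p] M] (ρ : Representation ℤ_[p] G M)
    (H₁ H₂ : Subgroup G)
    (hiso : ∃ e : ((G ⧸ H₁) →₀ ℤ_[p]) ≃ₗ[ℤ_[p]] ((G ⧸ H₂) →₀ ℤ_[p]),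
      ∀ (g : G) (x : (G ⧸ H₁) →₀ ℤ_[p]),
        e (Finsupp.mapDomain (fun c => g • c) x) = Finsupp.mapDomain (fun c => g • c) (e x))
    (F₁ F₂ : Submodule ℤ_[p] M)
    (hF₁ : (F₁ : Set M) = {m : M | ∀ h ∈ H₁, ρ h m = m})
    (hF₂ : (F₂ : Set M) = {m : M | ∀ h ∈ H₂, ρ h m = m}) :
    Nonempty (↥F₁ ≃ₗ[ℤ_[p]] ↥F₂) := by
  obtain ⟨e, he⟩ := hiso
  have hesymm : ∀ (g : G) (y : (G ⧸ H₂) →₀ ℤ_[p]),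
      e.symm (Finsupp.mapDomain (fun c => g • c) y)
        = Finsupp.mapDomain (fun c => g • c) (e.symm y) := by
    intro g y
    apply e.injective
    rw [e.apply_symm_apply, he, e.apply_symm_apply]
  have hmem₁ : ∀ m : M, m ∈ F₁ ↔ ∀ h ∈ H₁, ρ h m = m := by
    intro m; rw [← SetLike.mem_coe, hF₁]; rfl
  have hmem₂ : ∀ m : M, m ∈ F₂ ↔ ∀ h ∈ H₂, ρ h m = m := by
    intro m; rw [← SetLike.mem_coe, hF₂]; rfl
  -- forward and backward maps
  set s₁ : (G ⧸ H₁) →₀ ℤ_[p] := Finsupp.single ((1 : G) : G ⧸ H₁) 1 with hs₁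
  set s₂ : (G ⧸ H₂) →₀ ℤ_[p] := Finsupp.single ((1 : G) : G ⧸ H₂) 1 with hs₂
  -- key: if m is H₁-fixed, fixMap ρ H₁ m (e.symm s₂) is H₂-fixed
  have key₁ : ∀ m : M, (∀ h ∈ H₁, ρ h m = m) →
      ∀ h ∈ H₂, ρ h (fixMap ρ H₁ m (e.symm s₂)) = fixMap ρ H₁ m (e.symm s₂) := by
    intro m hm h hh
    rw [← fixMap_equivariant ρ H₁ hm h, ← hesymm]
    congr 2
    rw [hs₂, Finsupp.mapDomain_single]
    congr 1
    show ((h * 1 : G) : G ⧸ H₂) = _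
    rw [mul_one]
    rw [QuotientGroup.eq]
    simpa using hh
  have key₂ : ∀ m : M, (∀ h ∈ H₂, ρ h m = m) →
      ∀ h ∈ H₁, ρ h (fixMap ρ H₂ m (e s₁)) = fixMap ρ H₂ m (e s₁) := by
    intro m hm h hh
    rw [← fixMap_equivariant ρ H₂ hm h, ← he]
    congr 2
    rw [hs₁, Finsupp.mapDomain_single]
    congr 1
    show ((h * 1 : G) : G ⧸ H₁) = _
    rw [mul_one]
    rw [QuotientGroup.eq]
    simpa using hh
  -- roundtrip
  have round₁ : ∀ m : M, (hm : ∀ h ∈ H₁, ρ h m = m) →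
      fixMap ρ H₂ (fixMap ρ H₁ m (e.symm s₂)) (e s₁) = m := by
    intro m hm
    have hcomp : (fixMap ρ H₁ m).comp (e.symm : ((G ⧸ H₂) →₀ ℤ_[p]) →ₗ[ℤ_[p]] ((G ⧸ H₁) →₀ ℤ_[p]))
        = fixMap ρ H₂ (fixMap ρ H₁ m (e.symm s₂)) := by
      have := fixMap_eq_of_equivariant ρ H₂
        ((fixMap ρ H₁ m).comp (e.symm : ((G ⧸ H₂) →₀ ℤ_[p]) →ₗ[ℤ_[p]] ((G ⧸ H₁) →₀ ℤ_[p])))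
        (by intro g x
            simp only [LinearMap.comp_apply, LinearEquiv.coe_coe]
            rw [hesymm, fixMap_equivariant ρ H₁ hm])
        (by simpa using key₁ m hm)
      simpa using this
    have := congrArg (fun f => f (e s₁)) hcomp
    simp only [LinearMap.comp_apply, LinearEquiv.coe_coe, LinearEquiv.symm_apply_apply] at this
    rw [← this, fixMap_single_one ρ H₁ hm]
  have round₂ : ∀ m : M, (hm : ∀ h ∈ H₂, ρ h m = m) →
      fixMap ρ H₁ (fixMap ρ H₂ m (e s₁)) (e.symm s₂) = m := by
    intro m hm
    have hcomp : (fixMap ρ H₂ m).comp (e : ((G ⧸ H₁) →₀ ℤ_[p]) →ₗ[ℤ_[p]] ((G ⧸ H₂) →₀ ℤ_[p]))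
        = fixMap ρ H₁ (fixMap ρ H₂ m (e s₁)) := by
      have := fixMap_eq_of_equivariant ρ H₁
        ((fixMap ρ H₂ m).comp (e : ((G ⧸ H₁) →₀ ℤ_[p]) →ₗ[ℤ_[p]] ((G ⧸ H₂) →₀ ℤ_[p])))
        (by intro g x
            simp only [LinearMap.comp_apply, LinearEquiv.coe_coe]
            rw [he, fixMap_equivariant ρ H₂ hm])
        (by simpa using key₂ m hm)
      simpa using this
    have := congrArg (fun f => f (e.symm s₂)) hcomp
    simp only [LinearMap.comp_apply, LinearEquiv.coe_coe, LinearEquiv.apply_symm_apply] at this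
    rw [← this, fixMap_single_one ρ H₂ hm]
  refine ⟨⟨⟨⟨fun m => ⟨fixMap ρ H₁ m (e.symm s₂), (hmem₂ _).mpr
      (key₁ m ((hmem₁ m).mp m.2))⟩, ?_⟩, ?_⟩,
    fun m => ⟨fixMap ρ H₂ m (e s₁), (hmem₁ _).mpr (key₂ m ((hmem₂ m).mp m.2))⟩, ?_, ?_⟩⟩
  · intro a b
    ext
    simp [fixMap_add]
  · intro c a
    ext
    simp [fixMap_smul]
  · intro a
    ext
    exact round₁ a ((hmem₁ a).mp a.2)
  · intro a
    ext
    exact round₂ a ((hmem₂ a).mp a.2)
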